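/- Let p ∈ (1,+∞) and let W₀ : M^{3×2} → [0,+∞] satisfy the stated hypotheses. Define the sequence R_i W₀ by R₀W₀ := W₀ and, for every i ≥ 0 and F ∈ M^{3×2}, R_{i+1}W₀(F) := inf{ (1−λ) R_iW₀(F + λ b⊗a) + λ R_iW₀(F − (1−λ) b⊗a) : a ∈ ℝ², b ∈ ℝ³, λ ∈ [0,1] }, where b⊗a ∈ M^{3×2} has entries (b⊗a)_{ij} = b_i a_j. Then: R_iW₀ is upper semicontinuous for every i ≥ 0; R_iW₀ is finite-valued for every i ≥ 2; R_{i+1}W₀ ≤ R_iW₀ pointwise for every i ≥ 0; and the rank-one convex envelope satisfies RW₀(F) = inf_{i ≥ 0} R_iW₀(F) for every F ∈ M^{3×2}. -/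

import Mathlib

open scoped ENNReal
open MeasureTheory

noncomputable section

/-- Frobenius norm of a real matrix. -/
def frob {m n : ℕ} (A : Matrix (Fin m) (Fin n) ℝ) : ℝ :=
  Real.sqrt (∑ i, ∑ j, (A i j) ^ 2)

/-- Euclidean norm on ℝ³ (viewed as `Fin 3 → ℝ`). -/
def enorm3 (v : Fin 3 → ℝ) : ℝ := Real.sqrt (∑ i, (v i) ^ 2)

/-- Cross product `F¹ ∧ F²` of the two columns of `F ∈ M^{3×2}`. -/
def colCross (F : Matrix (Fin 3) (Fin 2) ℝ) : Fin 3 → ℝ :=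
  crossProduct (fun i => F i 0) (fun i => F i 1)

/-- Rank-one convexity of an `[0,+∞]`-valued function on `M^{3×2}`. -/
def RankOneConvex (g : Matrix (Fin 3) (Fin 2) ℝ → ℝ≥0∞) : Prop :=
  ∀ l : ℝ, l ∈ Set.Ioo (0 : ℝ) 1 → ∀ A B : Matrix (Fin 3) (Fin 2) ℝ, (A - B).rank = 1 →
    g (l • A + (1 - l) • B) ≤ ENNReal.ofReal l * g A + ENNReal.ofReal (1 - l) * g B

/-- Rank-one convex envelope: the pointwise supremum of all rank-one convex functions below `f`. -/
def rcEnv (f : Matrix (Fin 3) (Fin 2) ℝ → ℝ≥0∞) (F : Matrix (Fin 3) (Fin 2) ℝ) : ℝ≥0∞ :=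
  ⨆ (g : Matrix (Fin 3) (Fin 2) ℝ → ℝ≥0∞) (_ : RankOneConvex g ∧ ∀ G, g G ≤ f G), g F

/-- Gradient matrix of a map `φ : ℝ² → ℝ³`. -/
def gradM (φ : EuclideanSpace ℝ (Fin 2) → EuclideanSpace ℝ (Fin 3))
    (x : EuclideanSpace ℝ (Fin 2)) : Matrix (Fin 3) (Fin 2) ℝ :=
  Matrix.of fun i j => fderiv ℝ φ x (EuclideanSpace.single j 1) i

/-- Quasiconvex envelope: `Qf(ξ) = inf { ⨍_{B₁} f(ξ + ∇φ) : φ Lipschitz, φ = 0 outside B₁ }`. -/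
def qcEnv (f : Matrix (Fin 3) (Fin 2) ℝ → ℝ≥0∞) (ξ : Matrix (Fin 3) (Fin 2) ℝ) : ℝ≥0∞ :=
  ⨅ (φ : EuclideanSpace ℝ (Fin 2) → EuclideanSpace ℝ (Fin 3))
    (_ : (∃ K, LipschitzWith K φ) ∧
      ∀ x ∉ Metric.ball (0 : EuclideanSpace ℝ (Fin 2)) 1, φ x = 0),
    (∫⁻ x in Metric.ball (0 : EuclideanSpace ℝ (Fin 2)) 1, f (ξ + gradM φ x)) /
      volume (Metric.ball (0 : EuclideanSpace ℝ (Fin 2)) 1)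

/-- The Kohn–Strang iteration: `R₀W₀ = W₀` and
`R_{i+1}W₀(F) = inf { (1−λ) R_iW₀(F + λ b⊗a) + λ R_iW₀(F − (1−λ) b⊗a) }`,
the infimum being over `a ∈ ℝ²`, `b ∈ ℝ³`, `λ ∈ [0,1]`. -/
def Riter (f : Matrix (Fin 3) (Fin 2) ℝ → ℝ≥0∞) : ℕ → Matrix (Fin 3) (Fin 2) ℝ → ℝ≥0∞
  | 0 => f
  | (i + 1) => fun F =>
      ⨅ (a : Fin 2 → ℝ) (b : Fin 3 → ℝ) (l : ℝ) (_ : l ∈ Set.Icc (0 : ℝ) 1),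
        ENNReal.ofReal (1 - l) * Riter f i (F + l • Matrix.vecMulVec b a) +
          ENNReal.ofReal l * Riter f i (F - (1 - l) • Matrix.vecMulVec b a)

abbrev M32 := Matrix (Fin 3) (Fin 2) ℝ


lemma usc_iInf {α : Type*} [TopologicalSpace α] {ι : Sort*} (f : ι → α → ℝ≥0∞)
    (hf : ∀ i, UpperSemicontinuous (f i)) : UpperSemicontinuous (fun x => ⨅ i, f i x) := by
  intro x y hy
  obtain ⟨i, hi⟩ := iInf_lt_iff.mp hy
  filter_upwards [hf i x y hi] with z hz
  exact lt_of_le_of_lt (iInf_le _ i) hz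

lemma usc_const_mul {α : Type*} [TopologicalSpace α] {g : α → ℝ≥0∞}
    (hg : UpperSemicontinuous g) (c : ℝ) :
    UpperSemicontinuous (fun x => ENNReal.ofReal c * g x) :=
  (ENNReal.continuous_const_mul ENNReal.ofReal_ne_top).comp_upperSemicontinuous hg
    (fun _ _ h => mul_le_mul_right h _)

example (u : Fin 3 → ℝ) (hu : u ≠ 0) : ∃ b, crossProduct u b ≠ 0 := by
  by_contra h
  push_neg at h
  have h0 := h ![1,0,0]
  have h1 := h ![0,1,0]
  rw [cross_apply] at h0 h1
  apply hu
  have e00 := congrFun h0 1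
  have e01 := congrFun h0 2
  have e12 := congrFun h1 2
  simp at e00 e01 e12
  funext i
  fin_cases i <;> simp [e00, e01, e12]

lemma crossL (u : Fin 3 → ℝ) (hu : u ≠ 0) : ∃ b, crossProduct b u ≠ 0 := by
  by_contra h
  push_neg at h
  have h0 := h ![1,0,0]
  have h1 := h ![0,1,0]
  rw [cross_apply] at h0 h1
  apply hu
  have e00 := congrFun h0 1
  have e01 := congrFun h0 2
  have e12 := congrFun h1 2
  simp at e00 e01 e12
  funext i
  fin_cases i <;> simp <;> linarith

lemma vecMulVec_mulVec (b : Fin 3 → ℝ) (a : Fin 2 → ℝ) (v : Fin 2 → ℝ) :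
    (Matrix.vecMulVec b a).mulVec v = (dotProduct a v) • b := by
  funext i
  simp [Matrix.mulVec, Matrix.vecMulVec_apply, dotProduct, Finset.sum_mul]
  ring

lemma rank_vecMulVec_one {b : Fin 3 → ℝ} {a : Fin 2 → ℝ} (hb : b ≠ 0) (ha : a ≠ 0) :
    (Matrix.vecMulVec b a).rank = 1 := by
  have hrange : LinearMap.range (Matrix.vecMulVec b a).mulVecLin = Submodule.span ℝ {b} := by
    apply le_antisymm
    · rintro _ ⟨v, rfl⟩
      rw [Matrix.mulVecLin_apply, vecMulVec_mulVec]
      exact Submodule.smul_mem _ _ (Submodule.mem_span_singleton_self b)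
    · rw [Submodule.span_le, Set.singleton_subset_iff]
      obtain ⟨j, hj⟩ : ∃ j, a j ≠ 0 := by
        by_contra h; push_neg at h; exact ha (funext h)
      refine ⟨Pi.single j (a j)⁻¹, ?_⟩
      rw [Matrix.mulVecLin_apply, vecMulVec_mulVec]
      simp [hj]
  rw [Matrix.rank, hrange, finrank_span_singleton hb]

lemma exists_vecMulVec {M : M32} (h : M.rank = 1) :
    ∃ (b : Fin 3 → ℝ) (a : Fin 2 → ℝ), M = Matrix.vecMulVec b a := by
  rw [Matrix.rank] at h
  obtain ⟨v, hv0, hv⟩ := finrank_eq_one_iff'.mp h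
  refine ⟨(v : Fin 3 → ℝ), ?_⟩
  choose c hc using fun j : Fin 2 =>
    hv ⟨M.mulVec (Pi.single j 1), LinearMap.mem_range.mpr ⟨Pi.single j 1, rfl⟩⟩
  refine ⟨c, ?_⟩
  ext i j
  have := congrFun (congrArg (Subtype.val) (hc j)) i
  simp [Matrix.mulVec_single] at this
  rw [Matrix.vecMulVec_apply, mul_comm, this]


lemma exists_tau {v₀ w : Fin 3 → ℝ} (hw : w ≠ 0) :
    ∃ τ : ℝ, v₀ + τ • w ≠ 0 ∧ v₀ - τ • w ≠ 0 := by
  have key : ∀ s t : ℝ, v₀ + s • w = 0 → v₀ + t • w = 0 → s ≠ t → False := by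
    intro s t hs ht hst
    apply hw
    have h2 : (s - t) • w = 0 := by
      have : (s - t) • w = (v₀ + s • w) - (v₀ + t • w) := by module
      rw [this, hs, ht, sub_zero]
    exact (smul_eq_zero.mp h2).resolve_left (sub_ne_zero.mpr hst)
  by_contra h
  push_neg at h
  have H : ∀ τ : ℝ, v₀ + τ • w = 0 ∨ v₀ + (-τ) • w = 0 := by
    intro τ
    by_contra hτ
    push_neg at hτ
    have := h τ hτ.1
    rw [sub_eq_add_neg, ← neg_smul] at this
    exact hτ.2 this
  rcases H 1 with h1 | h1 <;> rcases H 2 with h2 | h2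
  · exact key _ _ h1 h2 (by norm_num)
  · exact key _ _ h1 h2 (by norm_num)
  · exact key _ _ h1 h2 (by norm_num)
  · exact key _ _ h1 h2 (by norm_num)

lemma colCross_pert1 (F : M32) (b : Fin 3 → ℝ) (c s : ℝ) :
    colCross (F + c • Matrix.vecMulVec b ![0, s]) =
      colCross F + (c * s) • crossProduct (fun i => F i 0) b := by
  have h0 : (fun i => (F + c • Matrix.vecMulVec b ![0, s]) i 0) = fun i => F i 0 := by
    funext i; simp [Matrix.vecMulVec_apply]
  have h1 : (fun i => (F + c • Matrix.vecMulVec b ![0, s]) i 1) =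
      (fun i => F i 1) + (c * s) • b := by
    funext i; simp [Matrix.vecMulVec_apply]; ring
  rw [colCross, h0, h1, map_add, _root_.map_smul]
  rfl

lemma colCross_pert0 (F : M32) (b : Fin 3 → ℝ) (c s : ℝ) :
    colCross (F + c • Matrix.vecMulVec b ![s, 0]) =
      colCross F + (c * s) • crossProduct b (fun i => F i 1) := by
  have h1 : (fun i => (F + c • Matrix.vecMulVec b ![s, 0]) i 1) = fun i => F i 1 := by
    funext i; simp [Matrix.vecMulVec_apply]
  have h0 : (fun i => (F + c • Matrix.vecMulVec b ![s, 0]) i 0) =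
      (fun i => F i 0) + (c * s) • b := by
    funext i; simp [Matrix.vecMulVec_apply]; ring
  rw [colCross, h0, h1, map_add, LinearMap.add_apply, _root_.map_smul, LinearMap.smul_apply]
  rfl

lemma exists_pert (F : M32) (hF : F ≠ 0) :
    ∃ (a : Fin 2 → ℝ) (b : Fin 3 → ℝ),
      colCross (F + (2⁻¹ : ℝ) • Matrix.vecMulVec b a) ≠ 0 ∧
      colCross (F - (2⁻¹ : ℝ) • Matrix.vecMulVec b a) ≠ 0 := by
  have hsub : ∀ (M : M32), F - (2⁻¹ : ℝ) • M = F + (-2⁻¹ : ℝ) • M := by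
    intro M; module
  have hcols : (fun i => F i 0) ≠ 0 ∨ (fun i => F i 1) ≠ 0 := by
    by_contra h
    push_neg at h
    apply hF
    ext i j
    fin_cases j
    · exact congrFun h.1 i
    · exact congrFun h.2 i
  rcases hcols with hc | hc
  · obtain ⟨b, hw⟩ : ∃ b, crossProduct (fun i => F i 0) b ≠ 0 := by
      by_contra h
      push_neg at h
      have h0 := h ![1,0,0]
      have h1 := h ![0,1,0]
      rw [cross_apply] at h0 h1
      apply hc
      have e00 := congrFun h0 1
      have e01 := congrFun h0 2
      have e12 := congrFun h1 2
      simp at e00 e01 e12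
      funext i
      fin_cases i <;> simp [e00, e01, e12]
    obtain ⟨τ, hτp, hτm⟩ := exists_tau (v₀ := colCross F) hw
    refine ⟨![0, 2*τ], b, ?_, ?_⟩
    · rw [colCross_pert1]
      convert hτp using 3
      ring
    · rw [hsub, colCross_pert1]
      rw [sub_eq_add_neg, ← neg_smul] at hτm
      convert hτm using 3
      ring
  · obtain ⟨b, hw⟩ := crossL _ hc
    obtain ⟨τ, hτp, hτm⟩ := exists_tau (v₀ := colCross F) hw
    refine ⟨![2*τ, 0], b, ?_, ?_⟩
    · rw [colCross_pert0]
      convert hτp using 3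
      ring
    · rw [hsub, colCross_pert0]
      rw [sub_eq_add_neg, ← neg_smul] at hτm
      convert hτm using 3
      ring


lemma Riter_le_choice (f : M32 → ℝ≥0∞) (i : ℕ) (F : M32) (a : Fin 2 → ℝ) (b : Fin 3 → ℝ)
    (l : ℝ) (hl : l ∈ Set.Icc (0 : ℝ) 1) :
    Riter f (i + 1) F ≤
      ENNReal.ofReal (1 - l) * Riter f i (F + l • Matrix.vecMulVec b a) +
        ENNReal.ofReal l * Riter f i (F - (1 - l) • Matrix.vecMulVec b a) := by
  rw [show Riter f (i+1) F = ⨅ (a : Fin 2 → ℝ) (b : Fin 3 → ℝ) (l : ℝ)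
      (_ : l ∈ Set.Icc (0 : ℝ) 1),
        ENNReal.ofReal (1 - l) * Riter f i (F + l • Matrix.vecMulVec b a) +
          ENNReal.ofReal l * Riter f i (F - (1 - l) • Matrix.vecMulVec b a) from rfl]
  exact iInf_le_of_le a (iInf_le_of_le b (iInf_le_of_le l (iInf_le _ hl)))

lemma Riter_succ_le (f : M32 → ℝ≥0∞) (i : ℕ) (F : M32) :
    Riter f (i + 1) F ≤ Riter f i F := by
  refine (Riter_le_choice f i F 0 0 0 ⟨le_refl _, zero_le_one⟩).trans_eq ?_
  have hz : Matrix.vecMulVec (0 : Fin 3 → ℝ) (0 : Fin 2 → ℝ) = 0 := by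
    ext i j; simp [Matrix.vecMulVec_apply]
  simp [hz]

lemma Riter_anti (f : M32 → ℝ≥0∞) (F : M32) : Antitone (fun i => Riter f i F) :=
  antitone_nat_of_succ_le (fun i => Riter_succ_le f i F)

lemma Riter_usc (f : M32 → ℝ≥0∞) (hf : Continuous f) (i : ℕ) :
    UpperSemicontinuous (Riter f i) := by
  induction i with
  | zero => exact hf.upperSemicontinuous
  | succ i ih =>
    have : Riter f (i + 1) = fun F =>
        ⨅ (a : Fin 2 → ℝ) (b : Fin 3 → ℝ) (l : ℝ) (_ : l ∈ Set.Icc (0 : ℝ) 1),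
          ENNReal.ofReal (1 - l) * Riter f i (F + l • Matrix.vecMulVec b a) +
            ENNReal.ofReal l * Riter f i (F - (1 - l) • Matrix.vecMulVec b a) := rfl
    rw [this]
    apply usc_iInf; intro a
    apply usc_iInf; intro b
    apply usc_iInf; intro l
    apply usc_iInf; intro _
    have c1 : Continuous (fun F : M32 => F + l • Matrix.vecMulVec b a) :=
      continuous_id.add continuous_const
    have c2 : Continuous (fun F : M32 => F - (1 - l) • Matrix.vecMulVec b a) :=
      continuous_id.sub continuous_const
    exact (usc_const_mul (ih.comp c1) (1 - l)).add
      (usc_const_mul (ih.comp c2) l)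

lemma Riter_one_ne_top (f : M32 → ℝ≥0∞) (htop : ∀ F, f F = ⊤ ↔ colCross F = 0)
    {F : M32} (hF : F ≠ 0) : Riter f 1 F ≠ ⊤ := by
  obtain ⟨a, b, hp, hm⟩ := exists_pert F hF
  have hle := Riter_le_choice f 0 F a b 2⁻¹ ⟨by norm_num, by norm_num⟩
  rw [show (1 : ℝ) - 2⁻¹ = 2⁻¹ by norm_num] at hle
  refine ne_top_of_le_ne_top ?_ hle
  refine ENNReal.add_ne_top.mpr ⟨ENNReal.mul_ne_top ENNReal.ofReal_ne_top ?_,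
    ENNReal.mul_ne_top ENNReal.ofReal_ne_top ?_⟩
  · exact fun h => hp ((htop _).mp h)
  · exact fun h => hm ((htop _).mp h)

lemma Riter_ne_top (f : M32 → ℝ≥0∞) (htop : ∀ F, f F = ⊤ ↔ colCross F = 0)
    {i : ℕ} (hi : 2 ≤ i) (F : M32) : Riter f i F ≠ ⊤ := by
  have h2 : Riter f 2 F ≠ ⊤ := by
    by_cases hF : F = 0
    · subst hF
      have hle := Riter_le_choice f 1 0 ![1, 0] ![1, 0, 0] 2⁻¹ ⟨by norm_num, by norm_num⟩
      rw [show (1 : ℝ) - 2⁻¹ = 2⁻¹ by norm_num] at hle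
      refine ne_top_of_le_ne_top ?_ hle
      refine ENNReal.add_ne_top.mpr ⟨ENNReal.mul_ne_top ENNReal.ofReal_ne_top ?_,
        ENNReal.mul_ne_top ENNReal.ofReal_ne_top ?_⟩
      · refine Riter_one_ne_top f htop ?_
        intro h
        have := congrFun (congrFun h 0) 0
        simp [Matrix.vecMulVec_apply] at this
      · refine Riter_one_ne_top f htop ?_
        intro h
        have := congrFun (congrFun h 0) 0
        simp [Matrix.vecMulVec_apply] at this
    · exact ne_top_of_le_ne_top (Riter_one_ne_top f htop hF) (Riter_succ_le f 1 F)
  exact ne_top_of_le_ne_top h2 (Riter_anti f F hi)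

lemma Riter_succ_def (f : M32 → ℝ≥0∞) (i : ℕ) (F : M32) :
    Riter f (i + 1) F = ⨅ (a : Fin 2 → ℝ) (b : Fin 3 → ℝ) (l : ℝ)
      (_ : l ∈ Set.Icc (0 : ℝ) 1),
        ENNReal.ofReal (1 - l) * Riter f i (F + l • Matrix.vecMulVec b a) +
          ENNReal.ofReal l * Riter f i (F - (1 - l) • Matrix.vecMulVec b a) := rfl

lemma le_Riter (f g : M32 → ℝ≥0∞) (hg : RankOneConvex g) (hle : ∀ G, g G ≤ f G) :
    ∀ i F, g F ≤ Riter f i F := by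
  intro i
  induction i with
  | zero => exact hle
  | succ i ih =>
    intro F
    rw [Riter_succ_def]
    refine le_iInf fun a => le_iInf fun b => le_iInf fun l => le_iInf fun hl => ?_
    by_cases hM0 : Matrix.vecMulVec b a = 0
    · rw [hM0]
      simp only [smul_zero, add_zero, sub_zero]
      calc g F = (ENNReal.ofReal (1 - l) + ENNReal.ofReal l) * g F := by
            rw [← ENNReal.ofReal_add (by linarith [hl.2]) hl.1]
            norm_num
        _ = ENNReal.ofReal (1 - l) * g F + ENNReal.ofReal l * g F := add_mul _ _ _
        _ ≤ _ := add_le_add (mul_le_mul_right (ih F) _) (mul_le_mul_right (ih F) _)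
    · by_cases hl0 : l = 0
      · subst hl0
        simp only [zero_smul, add_zero, sub_zero, ENNReal.ofReal_zero, zero_mul,
          ENNReal.ofReal_one, one_mul]
        exact ih F
      · by_cases hl1 : l = 1
        · subst hl1
          simp only [sub_self, ENNReal.ofReal_zero, zero_mul, ENNReal.ofReal_one, one_mul,
            zero_add, zero_smul, sub_zero]
          exact ih F
        · have hb : b ≠ 0 := by
            intro h; apply hM0; ext i j; simp [h, Matrix.vecMulVec_apply]
          have ha : a ≠ 0 := by
            intro h; apply hM0; ext i j; simp [h, Matrix.vecMulVec_apply]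
          set M := Matrix.vecMulVec b a with hMdef
          have hrank : ((F + l • M) - (F - (1 - l) • M)).rank = 1 := by
            have h2 : (F + l • M) - (F - (1 - l) • M) = M := by module
            rw [h2]
            exact rank_vecMulVec_one hb ha
          have hl0' : 0 < l := lt_of_le_of_ne hl.1 (Ne.symm hl0)
          have hl1' : l < 1 := lt_of_le_of_ne hl.2 hl1
          have hkey := hg (1 - l) ⟨by linarith, by linarith⟩ (F + l • M) (F - (1 - l) • M) hrank
          rw [sub_sub_cancel] at hkey
          have hF : (1 - l) • (F + l • M) + l • (F - (1 - l) • M) = F := by module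
          rw [hF] at hkey
          exact hkey.trans (add_le_add (mul_le_mul_right (ih _) _) (mul_le_mul_right (ih _) _))

lemma rinf_rc (f : M32 → ℝ≥0∞) : RankOneConvex (fun F => ⨅ i, Riter f i F) := by
  intro l hl A B hrank
  obtain ⟨b, a, hM⟩ := exists_vecMulVec hrank
  set F := l • A + (1 - l) • B with hFdef
  have key : ∀ i, Riter f (i + 1) F ≤
      ENNReal.ofReal l * Riter f i A + ENNReal.ofReal (1 - l) * Riter f i B := by
    intro i
    have h := Riter_le_choice f i F a b (1 - l) ⟨by linarith [hl.2], by linarith [hl.1]⟩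
    rw [sub_sub_cancel] at h
    have e1 : F + (1 - l) • Matrix.vecMulVec b a = A := by rw [← hM, hFdef]; module
    have e2 : F - l • Matrix.vecMulVec b a = B := by rw [← hM, hFdef]; module
    rwa [e1, e2] at h
  calc (⨅ i, Riter f i F)
      ≤ ⨅ i, (ENNReal.ofReal l * Riter f i A + ENNReal.ofReal (1 - l) * Riter f i B) :=
        le_iInf fun i => (iInf_le _ (i + 1)).trans (key i)
    _ = (⨅ i, ENNReal.ofReal l * Riter f i A) +
        (⨅ i, ENNReal.ofReal (1 - l) * Riter f i B) :=
        (ENNReal.iInf_add_iInf fun i j => ⟨max i j,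
          add_le_add (mul_le_mul_right (Riter_anti f A (le_max_left i j)) _)
            (mul_le_mul_right (Riter_anti f B (le_max_right i j)) _)⟩).symm
    _ = ENNReal.ofReal l * (⨅ i, Riter f i A) +
        ENNReal.ofReal (1 - l) * (⨅ i, Riter f i B) := by
        rw [ENNReal.mul_iInf' (fun h => absurd h ENNReal.ofReal_ne_top) (fun _ => ⟨0⟩),
          ENNReal.mul_iInf' (fun h => absurd h ENNReal.ofReal_ne_top) (fun _ => ⟨0⟩)]

/-- properties of the Kohn–Strang iteration: each `R_iW₀` is upper
semicontinuous, `R_iW₀` is finite-valued for `i ≥ 2`, the sequence is pointwise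
nonincreasing, and its pointwise infimum is the rank-one convex envelope `RW₀`. -/
theorem stmt13 (p : ℝ) (hp : 1 < p) (W₀ : Matrix (Fin 3) (Fin 2) ℝ → ℝ≥0∞)
    (C₁ : ℝ) (hC₁ : 0 < C₁)
    (hcont : Continuous W₀)
    (hcoer : ∀ F, ENNReal.ofReal (C₁ * frob F ^ p - C₁⁻¹) ≤ W₀ F)
    (htop : ∀ F, W₀ F = ⊤ ↔ colCross F = 0)
    (hgrowth : ∀ δ : ℝ, 0 < δ → ∃ c : ℝ, 0 < c ∧ ∀ F,
      δ ≤ enorm3 (colCross F) → W₀ F ≤ ENNReal.ofReal (c * (1 + frob F ^ p))) :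
    (∀ i : ℕ, UpperSemicontinuous (Riter W₀ i)) ∧
    (∀ i : ℕ, 2 ≤ i → ∀ F, Riter W₀ i F ≠ ⊤) ∧
    (∀ i : ℕ, ∀ F, Riter W₀ (i + 1) F ≤ Riter W₀ i F) ∧
    (∀ F, rcEnv W₀ F = ⨅ i : ℕ, Riter W₀ i F) := by

  refine ⟨fun i => Riter_usc W₀ hcont i, fun i hi F => Riter_ne_top W₀ htop hi F,
    fun i F => Riter_succ_le W₀ i F, fun F => ?_⟩
  apply le_antisymm
  · exact iSup_le fun g => iSup_le fun hg => le_iInf fun i => le_Riter W₀ g hg.1 hg.2 i F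
  · exact le_iSup₂_of_le (fun G => ⨅ i, Riter W₀ i G)
      ⟨rinf_rc W₀, fun G => iInf_le (fun i => Riter W₀ i G) 0⟩ le_rfl
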